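/- arXiv:1506.06784 — 4 statements merged into one kernel-verified Lean document; each statement's English description precedes it below -/
import Mathlib

section
/- Let γ, σ_R > 0, z, f̄ ∈ ℝ, and set σ = (γ⁻¹ + σ_R⁻¹)⁻¹, K_h = σ_R/(σ_R + γ), K_R = γ/(σ_R + γ). Then K_h + K_R = 1 and σ·(z/γ + f̄/σ_R) = K_h·z + K_R·f̄. That is, the probabilistic shared control MAP is exactly a linear blend of the operator input z and autonomy mode f̄ with arbitration weights summing to one. -/
/-- The probabilistic shared control MAP `σ·(z/γ + f̄/σ_R)` with `σ = (γ⁻¹ + σ_R⁻¹)⁻¹`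
is exactly a linear blend `K_h·z + K_R·f̄` with arbitration weights
`K_h = σ_R/(σ_R + γ)`, `K_R = γ/(σ_R + γ)` summing to one. -/
theorem psc_map_is_linear_blend (γ σR z fbar : ℝ) (hγ : 0 < γ) (hσ : 0 < σR) :
    σR / (σR + γ) + γ / (σR + γ) = 1 ∧
      (γ⁻¹ + σR⁻¹)⁻¹ * (z / γ + fbar / σR) =
        (σR / (σR + γ)) * z + (γ / (σR + γ)) * fbar := by
  have h1 : σR + γ ≠ 0 := by positivity
  constructor
  · field_simp
  · field_simp
end

section
/- (Every linear blend is a probabilistic shared control MAP.) Let K_R ∈ (0,1), K_h = 1 − K_R, γ > 0, and set σ_R = γ/K_R − γ. Then σ_R > 0, and for all z, f̄ ∈ ℝ, σ·(z/γ + f̄/σ_R) = K_h·z + K_R·f̄, where σ = (γ⁻¹ + σ_R⁻¹)⁻¹. -/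
/-- Every linear blend is a probabilistic shared control MAP: for `K_R ∈ (0,1)`,
`K_h = 1 − K_R`, `γ > 0`, `σ_R = γ/K_R − γ`, one has `σ_R > 0` and
`σ·(z/γ + f̄/σ_R) = K_h·z + K_R·f̄` where `σ = (γ⁻¹ + σ_R⁻¹)⁻¹`. -/
theorem linear_blend_is_psc_map (KR γ : ℝ) (hKR : KR ∈ Set.Ioo (0 : ℝ) 1) (hγ : 0 < γ) :
    0 < γ / KR - γ ∧
      ∀ z fbar : ℝ,
        (γ⁻¹ + (γ / KR - γ)⁻¹)⁻¹ * (z / γ + fbar / (γ / KR - γ)) =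
          (1 - KR) * z + KR * fbar := by
  obtain ⟨h0, h1⟩ := hKR
  have hγne : γ ≠ 0 := ne_of_gt hγ
  have hKRne : KR ≠ 0 := ne_of_gt h0
  have h1K : (1 : ℝ) - KR ≠ 0 := by linarith
  have key : γ / KR - γ = γ * (1 - KR) / KR := by field_simp
  have hσ : 0 < γ / KR - γ := by
    rw [key]; exact div_pos (mul_pos hγ (by linarith)) h0
  refine ⟨hσ, fun z fbar => ?_⟩
  rw [key]
  have hs : (γ⁻¹ + (γ * (1 - KR) / KR)⁻¹)⁻¹ = γ * (1 - KR) := by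
    rw [inv_eq_iff_eq_inv]
    field_simp
    ring
  rw [hs]
  field_simp
end

section
/- (Theorem 3, suboptimality of linear blending for multimodal autonomy, quantitative form.) Let γ, s > 0, β₁, β₂ > 0, and m₁, m₂ ∈ ℝ with d = m₁ − m₂ ≠ 0. Define g(x) = exp(−(x − m₂)²/(2γ)) · (β₁·exp(−(x − m₁)²/(2s)) + β₂·exp(−(x − m₂)²/(2s))). Then g(m₂) ≥ β₂ and g((m₁ + m₂)/2) = (β₁ + β₂)·exp(−(d²/8)·(1/γ + 1/s)). Consequently, if (β₁ + β₂)·exp(−(d²/8)·(1/γ + 1/s)) < β₂, then the equal-weight linear blend (m₁ + m₂)/2 of the operator trajectory h̄ = m₂ and the autonomy mode m₁ satisfies g((m₁ + m₂)/2) < g(m₂), i.e., the linear blend is strictly suboptimal for the shared-control posterior g. -/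
/-- Shared-control posterior for a two-mode Gaussian-mixture autonomy distribution with
operator trajectory at `m₂` and agreeability parameter `γ`. -/
noncomputable def sharedPosterior (γ s β₁ β₂ m₁ m₂ x : ℝ) : ℝ :=
  Real.exp (-(x - m₂) ^ 2 / (2 * γ)) *
    (β₁ * Real.exp (-(x - m₁) ^ 2 / (2 * s)) + β₂ * Real.exp (-(x - m₂) ^ 2 / (2 * s)))

/-- Suboptimality of linear blending for multimodal autonomy, quantitative form:
`g(m₂) ≥ β₂`, `g((m₁+m₂)/2) = (β₁+β₂)·exp(−(d²/8)·(1/γ + 1/s))` with `d = m₁ − m₂`, and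
hence if `(β₁+β₂)·exp(−(d²/8)·(1/γ + 1/s)) < β₂` then the equal-weight linear blend
`(m₁+m₂)/2` is strictly suboptimal: `g((m₁+m₂)/2) < g(m₂)`. -/
theorem ltb_suboptimal_quantitative (γ s β₁ β₂ m₁ m₂ : ℝ)
    (hγ : 0 < γ) (hs : 0 < s) (hβ₁ : 0 < β₁) (hβ₂ : 0 < β₂)
    (hd : m₁ - m₂ ≠ 0) :
    sharedPosterior γ s β₁ β₂ m₁ m₂ m₂ ≥ β₂ ∧
      sharedPosterior γ s β₁ β₂ m₁ m₂ ((m₁ + m₂) / 2) =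
        (β₁ + β₂) * Real.exp (-(((m₁ - m₂) ^ 2) / 8) * (1 / γ + 1 / s)) ∧
      ((β₁ + β₂) * Real.exp (-(((m₁ - m₂) ^ 2) / 8) * (1 / γ + 1 / s)) < β₂ →
        sharedPosterior γ s β₁ β₂ m₁ m₂ ((m₁ + m₂) / 2) <
          sharedPosterior γ s β₁ β₂ m₁ m₂ m₂) := by
  have h1 : sharedPosterior γ s β₁ β₂ m₁ m₂ m₂ ≥ β₂ := by
    unfold sharedPosterior
    have : (-(m₂ - m₂) ^ 2 / (2 * γ)) = 0 := by ring
    rw [this, Real.exp_zero]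
    have : (-(m₂ - m₂) ^ 2 / (2 * s)) = 0 := by ring
    rw [this, Real.exp_zero]
    nlinarith [Real.exp_pos (-(m₂ - m₁) ^ 2 / (2 * s))]
  have h2 : sharedPosterior γ s β₁ β₂ m₁ m₂ ((m₁ + m₂) / 2) =
      (β₁ + β₂) * Real.exp (-(((m₁ - m₂) ^ 2) / 8) * (1 / γ + 1 / s)) := by
    unfold sharedPosterior
    have e1 : (-((m₁ + m₂) / 2 - m₂) ^ 2 / (2 * γ)) = -(((m₁ - m₂) ^ 2) / 8) * (1 / γ) := by
      field_simp; ring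
    have e2 : (-((m₁ + m₂) / 2 - m₁) ^ 2 / (2 * s)) = -(((m₁ - m₂) ^ 2) / 8) * (1 / s) := by
      field_simp; ring
    have e3 : (-((m₁ + m₂) / 2 - m₂) ^ 2 / (2 * s)) = -(((m₁ - m₂) ^ 2) / 8) * (1 / s) := by
      field_simp; ring
    rw [e1, e2, e3, mul_add (-((m₁ - m₂) ^ 2 / 8)), Real.exp_add]
    ring
  exact ⟨h1, h2, fun h => by rw [h2]; exact lt_of_lt_of_le h h1⟩
end

section
/- Let γ, Σ_h, Σ_f > 0 and μ_h, μ_f ∈ ℝ, and let (h*, f*) be the unique solution of the system (h* − f*)/γ + (h* − μ_h)/Σ_h = 0 and (f* − h*)/γ + (f* − μ_f)/Σ_f = 0. Then both h* and f* lie in the interval [min(μ_h, μ_f), max(μ_h, μ_f)]. That is, the jointly optimal operator and autonomy trajectories are each a compromise between the operator's mean trajectory and the autonomy's mean trajectory. -/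
/-- The jointly optimal operator and autonomy trajectories are each a compromise between
the operator's mean and the autonomy's mean: any solution of the stationarity system
lies in `[min(μ_h, μ_f), max(μ_h, μ_f)]` in both coordinates. -/
theorem joint_maximizer_between_means (γ Sh Sf μh μf hstar fstar : ℝ)
    (hγ : 0 < γ) (hSh : 0 < Sh) (hSf : 0 < Sf)
    (h1 : (hstar - fstar) / γ + (hstar - μh) / Sh = 0)
    (h2 : (fstar - hstar) / γ + (fstar - μf) / Sf = 0) :
    hstar ∈ Set.Icc (min μh μf) (max μh μf) ∧
      fstar ∈ Set.Icc (min μh μf) (max μh μf) := by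
  have e1 : Sh * (hstar - fstar) + γ * (hstar - μh) = 0 := by
    field_simp at h1; linarith
  have e2 : Sf * (fstar - hstar) + γ * (fstar - μf) = 0 := by
    field_simp at h2; linarith
  have key : ∀ a b ma mb Sa Sb : ℝ, 0 < Sa → 0 < Sb →
      Sa * (a - b) + γ * (a - ma) = 0 → Sb * (b - a) + γ * (b - mb) = 0 →
      a ≤ max ma mb := by
    intro a b ma mb Sa Sb hSa hSb ea eb
    by_contra hc; push_neg at hc
    have p1 : 0 < a - ma := by have := le_max_left ma mb; linarith
    have p2 : a - b < 0 := by nlinarith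
    have p3 : 0 < b - mb := by have := le_max_right ma mb; linarith
    nlinarith
  have key2 : ∀ a b ma mb Sa Sb : ℝ, 0 < Sa → 0 < Sb →
      Sa * (a - b) + γ * (a - ma) = 0 → Sb * (b - a) + γ * (b - mb) = 0 →
      min ma mb ≤ a := by
    intro a b ma mb Sa Sb hSa hSb ea eb
    by_contra hc; push_neg at hc
    have p1 : a - ma < 0 := by have := min_le_left ma mb; linarith
    have p2 : 0 < a - b := by nlinarith
    have p3 : b - mb < 0 := by have := min_le_right ma mb; linarith
    nlinarith
  have e2' : Sf * (fstar - hstar) + γ * (fstar - μf) = 0 := e2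
  refine ⟨⟨key2 _ _ _ _ _ _ hSh hSf e1 e2, key _ _ _ _ _ _ hSh hSf e1 e2⟩,
    ⟨?_, ?_⟩⟩
  · have := key2 fstar hstar μf μh Sf Sh hSf hSh e2 e1
    simpa [min_comm] using this
  · have := key fstar hstar μf μh Sf Sh hSf hSh e2 e1
    simpa [max_comm] using this
end
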